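/- Let D_± : [t1,∞) → ℝ be nonnegative C¹ functions satisfying, for some C > 0 and all t ≥ t1 ≥ 1: D_∓'(t) ≤ -(4/t) D_∓(t) + C t^{-3/2} D_∓(t) + (1/(2t))(D_+(t) + D_-(t)) + C t^{-5} D_∓(t)^{1/2}. Then there exists C' > 0 such that D_+(t) + D_-(t) ≤ C' t^{-3} for all t ≥ t1. -/

import Mathlib

lemma aux_rpow_neg32 {t : ℝ} (ht : 0 < t) : t ^ ((-3:ℝ)/2) = (t * Real.sqrt t)⁻¹ := by
  rw [show (-3:ℝ)/2 = -(3/2) by ring, Real.rpow_neg ht.le]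
  congr 1
  rw [show (3/2:ℝ) = 1 + 1/2 by ring, Real.rpow_add ht, Real.rpow_one, ← Real.sqrt_eq_rpow]

lemma aux_rpow_neg5 {t : ℝ} (ht : 0 < t) : t ^ ((-5:ℝ)) = (t^5)⁻¹ := by
  rw [show ((-5:ℝ)) = -((5:ℕ):ℝ) by norm_num, Real.rpow_neg ht.le, Real.rpow_natCast]

lemma aux_rpow_half (x : ℝ) : x ^ ((1:ℝ)/2) = Real.sqrt x := by
  rw [Real.sqrt_eq_rpow]

lemma aux_rpow_neg3 {t : ℝ} (ht : 0 < t) : t ^ ((-3:ℝ)) = (t^3)⁻¹ := by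
  rw [show ((-3:ℝ)) = -((3:ℕ):ℝ) by norm_num, Real.rpow_neg ht.le, Real.rpow_natCast]

lemma aux_val (C t s Fv A e : ℝ) (ht0 : 0 < t) (hs0 : 0 < s) (hts : s^2 = t)
    (he : 0 < e)
    (hA : A ≤ t⁻¹*Fv + 2*C*(t*s)⁻¹*Fv) :
    (A * t⁻¹ + Fv * -(t^2)⁻¹) * e + Fv * t⁻¹ * (e * (4*C*(-(1/(2*s))/s^2))) ≤ 0 := by
  have hs0' : s ≠ 0 := hs0.ne'
  have key : (A * t⁻¹ + Fv * -(t^2)⁻¹) + Fv * t⁻¹ * (4*C*(-(1/(2*s))/s^2))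
      = (A - (t⁻¹*Fv + 2*C*(t*s)⁻¹*Fv)) * t⁻¹ := by
    rw [← hts]; field_simp; ring
  have h2 : (A * t⁻¹ + Fv * -(t^2)⁻¹) * e + Fv * t⁻¹ * (e * (4*C*(-(1/(2*s))/s^2)))
      = e * ((A - (t⁻¹*Fv + 2*C*(t*s)⁻¹*Fv)) * t⁻¹) := by rw [← key]; ring
  rw [h2]
  have h3 : A - (t⁻¹*Fv + 2*C*(t*s)⁻¹*Fv) ≤ 0 := sub_nonpos.2 hA
  exact mul_nonpos_of_nonneg_of_nonpos he.le
    (mul_nonpos_of_nonpos_of_nonneg h3 (inv_nonneg.2 ht0.le))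

set_option maxHeartbeats 1000000 in
lemma aux_main (C t s P M P' M' sp sm : ℝ) (ht : 1 ≤ t) (hC : 0 < C)
    (hts : s^2 = t) (hs1 : 1 ≤ s)
    (hP : sp^2 = P) (hM : sm^2 = M) (hsp : 0 ≤ sp) (hsm : 0 ≤ sm)
    (hp : P' ≤ -(4/t)*P + C*(t*s)⁻¹*P + 1/(2*t)*(P+M) + C*(t^5)⁻¹*sp)
    (hm : M' ≤ -(4/t)*M + C*(t*s)⁻¹*M + 1/(2*t)*(P+M) + C*(t^5)⁻¹*sm) :
    4*t^3*(P+M) + t^4*(P'+M') + 2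
      ≤ t⁻¹*(t^4*(P+M)+2*t) + 2*C*(t*s)⁻¹*(t^4*(P+M)+2*t) := by
  have ht0 : 0 < t := lt_of_lt_of_le one_pos ht
  have hs0 : 0 < s := lt_of_lt_of_le one_pos hs1
  have hts5 : (0:ℝ) < t^5*s := by positivity
  rw [← mul_le_mul_iff_right₀ hts5]
  have h1 : t^5*s*P' ≤ -4*t^4*s*P + C*t^4*P + t^4*s*(P+M)/2 + C*s*sp := by
    calc t^5*s*P' ≤ t^5*s*(-(4/t)*P + C*(t*s)⁻¹*P + 1/(2*t)*(P+M) + C*(t^5)⁻¹*sp) :=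
          mul_le_mul_of_nonneg_left hp hts5.le
    _ = -4*t^4*s*P + C*t^4*P + t^4*s*(P+M)/2 + C*s*sp := by field_simp
  have h2 : t^5*s*M' ≤ -4*t^4*s*M + C*t^4*M + t^4*s*(P+M)/2 + C*s*sm := by
    calc t^5*s*M' ≤ t^5*s*(-(4/t)*M + C*(t*s)⁻¹*M + 1/(2*t)*(P+M) + C*(t^5)⁻¹*sm) :=
          mul_le_mul_of_nonneg_left hm hts5.le
    _ = -4*t^4*s*M + C*t^4*M + t^4*s*(P+M)/2 + C*s*sm := by field_simp
  have hr : t^5*s*(t⁻¹*(t^4*(P+M)+2*t) + 2*C*(t*s)⁻¹*(t^4*(P+M)+2*t))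
      = (t^4*s+2*C*t^4)*(t^4*(P+M)+2*t) := by field_simp
  rw [hr]
  have h45 : t^4*s^2 = t^5 := by rw [hts]; ring
  have h21 : (0:ℝ) ≤ t^2 - 1 := by nlinarith
  have ht64 : (0:ℝ) ≤ (t^4*(t^2-1))*(s*sp) :=
    mul_nonneg (mul_nonneg (pow_nonneg ht0.le 4) h21) (mul_nonneg hs0.le hsp)
  have ht64m : (0:ℝ) ≤ (t^4*(t^2-1))*(s*sm) :=
    mul_nonneg (mul_nonneg (pow_nonneg ht0.le 4) h21) (mul_nonneg hs0.le hsm)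
  have am_p : t^4*s*sp ≤ (t^8*P + t^5)/2 := by
    have am' : t^4*s*sp ≤ (t^8*sp^2 + t^4*s^2)/2 := by
      linarith [sq_nonneg (t^4*sp - t^2*s), ht64]
    rw [hP, h45] at am'; exact am'
  have am_m : t^4*s*sm ≤ (t^8*M + t^5)/2 := by
    have am' : t^4*s*sm ≤ (t^8*sm^2 + t^4*s^2)/2 := by
      linarith [sq_nonneg (t^4*sm - t^2*s), ht64m]
    rw [hM, h45] at am'; exact am'
  have h1' := mul_le_mul_of_nonneg_left h1 (pow_nonneg ht0.le 4)
  have h2' := mul_le_mul_of_nonneg_left h2 (pow_nonneg ht0.le 4)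
  have cam_p := mul_le_mul_of_nonneg_left am_p hC.le
  have cam_m := mul_le_mul_of_nonneg_left am_m hC.le
  have hPn : 0 ≤ P := hP ▸ sq_nonneg sp
  have hMn : 0 ≤ M := hM ▸ sq_nonneg sm
  have e1 : (0:ℝ) ≤ C*(t^8*P) := by positivity
  have e2 : (0:ℝ) ≤ C*(t^8*M) := by positivity
  have e3 : (0:ℝ) ≤ C*t^5 := by positivity
  linarith [h1', h2', cam_p, cam_m, e1, e2, e3]

set_option maxHeartbeats 1000000 in
theorem stmt15 (Dp Dm : ℝ → ℝ) (t1 C : ℝ) (ht1 : 1 ≤ t1) (hC : 0 < C)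
    (hnnp : ∀ t ≥ t1, 0 ≤ Dp t) (hnnm : ∀ t ≥ t1, 0 ≤ Dm t)
    (hdp : ∀ t ≥ t1, DifferentiableAt ℝ Dp t) (hdm : ∀ t ≥ t1, DifferentiableAt ℝ Dm t)
    (hip : ∀ t ≥ t1, deriv Dp t ≤ -(4 / t) * Dp t + C * t ^ ((-3:ℝ)/2) * Dp t
      + (1 / (2 * t)) * (Dp t + Dm t) + C * t ^ ((-5:ℝ)) * (Dp t) ^ ((1:ℝ)/2))
    (him : ∀ t ≥ t1, deriv Dm t ≤ -(4 / t) * Dm t + C * t ^ ((-3:ℝ)/2) * Dm t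
      + (1 / (2 * t)) * (Dp t + Dm t) + C * t ^ ((-5:ℝ)) * (Dm t) ^ ((1:ℝ)/2)) :
    ∃ C' > 0, ∀ t ≥ t1, Dp t + Dm t ≤ C' * t ^ ((-3:ℝ)) := by
  have hmain : ∀ t ≥ t1, 4*t^3*(Dp t + Dm t) + t^4*(deriv Dp t + deriv Dm t) + 2
      ≤ t⁻¹*(t^4*(Dp t + Dm t)+2*t)
        + 2*C*(t*Real.sqrt t)⁻¹*(t^4*(Dp t + Dm t)+2*t) := by
    intro t ht
    have ht1t : (1:ℝ) ≤ t := le_trans ht1 ht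
    have ht0 : (0:ℝ) < t := lt_of_lt_of_le one_pos ht1t
    have hs1 : (1:ℝ) ≤ Real.sqrt t := by
      rw [show (1:ℝ) = Real.sqrt 1 by simp]
      exact Real.sqrt_le_sqrt ht1t
    have hts : Real.sqrt t ^ 2 = t := Real.sq_sqrt ht0.le
    have hp := hip t ht
    have hm := him t ht
    rw [aux_rpow_neg32 ht0, aux_rpow_neg5 ht0, aux_rpow_half] at hp hm
    exact aux_main C t (Real.sqrt t) (Dp t) (Dm t) (deriv Dp t) (deriv Dm t)
      (Real.sqrt (Dp t)) (Real.sqrt (Dm t)) ht1t hC hts hs1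
      (Real.sq_sqrt (hnnp t ht)) (Real.sq_sqrt (hnnm t ht))
      (Real.sqrt_nonneg _) (Real.sqrt_nonneg _)
      (by linarith [hp]) (by linarith [hm])
  set G : ℝ → ℝ :=
    fun x => (x^4*(Dp x + Dm x) + 2*x) * x⁻¹ * Real.exp (4*C*(Real.sqrt x)⁻¹) with hGdef
  have key : ∀ t, t1 ≤ t → ∃ g, g ≤ 0 ∧ HasDerivAt G g t := by
    intro t ht
    have ht1t : (1:ℝ) ≤ t := le_trans ht1 ht
    have ht0 : (0:ℝ) < t := lt_of_lt_of_le one_pos ht1t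
    have hs0 : 0 < Real.sqrt t := Real.sqrt_pos.2 ht0
    have hts : Real.sqrt t ^ 2 = t := Real.sq_sqrt ht0.le
    have hPd : HasDerivAt Dp (deriv Dp t) t := (hdp t ht).hasDerivAt
    have hMd : HasDerivAt Dm (deriv Dm t) t := (hdm t ht).hasDerivAt
    have hFd : HasDerivAt (fun x => x^4*(Dp x + Dm x) + 2*x)
        (4*t^3*(Dp t + Dm t) + t^4*(deriv Dp t + deriv Dm t) + 2) t := by
      have h := ((hasDerivAt_pow 4 t).mul (hPd.add hMd)).add
        ((hasDerivAt_id' t).const_mul (2:ℝ))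
      refine h.congr_deriv ?_
      simp only [Pi.add_apply]; push_cast; ring
    have hud : HasDerivAt (fun x : ℝ => x⁻¹) (-(t^2)⁻¹) t := hasDerivAt_inv ht0.ne'
    have hsd : HasDerivAt Real.sqrt (1/(2*Real.sqrt t)) t := Real.hasDerivAt_sqrt ht0.ne'
    have hid : HasDerivAt (fun x => (Real.sqrt x)⁻¹)
        (-(1/(2*Real.sqrt t)) / (Real.sqrt t)^2) t := hsd.inv hs0.ne'
    have hwd : HasDerivAt (fun x => 4*C*(Real.sqrt x)⁻¹)
        (4*C*(-(1/(2*Real.sqrt t)) / (Real.sqrt t)^2)) t := hid.const_mul (4*C)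
    have hvd : HasDerivAt (fun x => Real.exp (4*C*(Real.sqrt x)⁻¹))
        (Real.exp (4*C*(Real.sqrt t)⁻¹) * (4*C*(-(1/(2*Real.sqrt t)) / (Real.sqrt t)^2))) t :=
      hwd.exp
    have hGd := (hFd.mul hud).mul hvd
    refine ⟨_, ?_, hGd⟩
    exact aux_val C t (Real.sqrt t) (t^4*(Dp t + Dm t) + 2*t) _ _ ht0 hs0 hts
      (Real.exp_pos _) (hmain t ht)
  have hcont : ContinuousOn G (Set.Ici t1) := by
    intro t ht
    obtain ⟨g, _, hgd⟩ := key t ht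
    exact hgd.continuousAt.continuousWithinAt
  have hdiff : DifferentiableOn ℝ G (interior (Set.Ici t1)) := by
    rw [interior_Ici]
    intro t ht
    obtain ⟨g, _, hgd⟩ := key t (le_of_lt ht)
    exact hgd.differentiableAt.differentiableWithinAt
  have hderiv : ∀ x ∈ interior (Set.Ici t1), deriv G x ≤ 0 := by
    rw [interior_Ici]
    intro t ht
    obtain ⟨g, hg0, hgd⟩ := key t (le_of_lt ht)
    rw [hgd.deriv]; exact hg0
  have hanti : AntitoneOn G (Set.Ici t1) :=
    antitoneOn_of_deriv_nonpos (convex_Ici t1) hcont hdiff hderiv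
  refine ⟨G t1, ?_, ?_⟩
  · have h1 : (0:ℝ) < t1 := lt_of_lt_of_le one_pos ht1
    have hp1 := hnnp t1 le_rfl
    have hm1 := hnnm t1 le_rfl
    have : G t1 = (t1^4*(Dp t1 + Dm t1) + 2*t1) * t1⁻¹ * Real.exp (4*C*(Real.sqrt t1)⁻¹) := rfl
    rw [this]
    positivity
  · intro t ht
    have ht0 : (0:ℝ) < t := lt_of_lt_of_le one_pos (le_trans ht1 ht)
    have hle : G t ≤ G t1 := hanti Set.self_mem_Ici ht ht
    have hexp : 1 ≤ Real.exp (4*C*(Real.sqrt t)⁻¹) := by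
      apply Real.one_le_exp
      positivity
    have hFt : 0 ≤ (t^4*(Dp t + Dm t) + 2*t) * t⁻¹ := by
      have := hnnp t ht; have := hnnm t ht; positivity
    have h2 : (t^4*(Dp t + Dm t) + 2*t) * t⁻¹ ≤ G t1 := by
      calc (t^4*(Dp t + Dm t) + 2*t) * t⁻¹
          ≤ (t^4*(Dp t + Dm t) + 2*t) * t⁻¹ * Real.exp (4*C*(Real.sqrt t)⁻¹) :=
            le_mul_of_one_le_right hFt hexp
        _ = G t := rfl
        _ ≤ G t1 := hle
    have h3 : t^3*(Dp t + Dm t) + 2 ≤ G t1 := by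
      have heq : (t^4*(Dp t + Dm t) + 2*t) * t⁻¹ = t^3*(Dp t + Dm t) + 2 := by
        field_simp
      rw [heq] at h2; exact h2
    rw [aux_rpow_neg3 ht0, ← div_eq_mul_inv, le_div_iff₀ (by positivity : (0:ℝ) < t^3)]
    nlinarith [h3]
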